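/- Example-2 approximate ('fake') solutions: with the Example-2 data, for every real ε with 0 < ε < 1, the matrix X_ε with rows [ε, 0, (1−ε)/2], [0, ε, 0], [(1−ε)/2, 0, (1−ε)²/(4ε)] is positive semidefinite and satisfies A₂ • X_ε = 1, A₁ • X_ε = ε, and C • X_ε = 2ε. Thus X_ε violates only the first primal constraint A₁ • X = 0, by exactly ε, and its objective value 2ε tends to the dual optimal value 0 as ε → 0, even though the primal optimal value is 1. -/

import Mathlib

open Matrix

/-- Example-2 approximate ("fake") solutions: for `0 < ε < 1` the matrix `X_ε` is
PSD, satisfies `A₂ • X_ε = 1`, violates only the first constraint (`A₁ • X_ε = ε`),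
has objective value `C • X_ε = 2ε`, and `2ε → 0` as `ε → 0⁺`. -/
theorem example2_fake_solutions :
    (∀ ε : ℝ, 0 < ε → ε < 1 →
      (!![ε, 0, (1 - ε) / 2; 0, ε, 0; (1 - ε) / 2, 0, (1 - ε) ^ 2 / (4 * ε)] :
          Matrix (Fin 3) (Fin 3) ℝ).PosSemidef ∧
      ((!![0, 0, 1; 0, 1, 0; 1, 0, 0] : Matrix (Fin 3) (Fin 3) ℝ) *
        !![ε, 0, (1 - ε) / 2; 0, ε, 0; (1 - ε) / 2, 0, (1 - ε) ^ 2 / (4 * ε)]).trace = 1 ∧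
      ((!![1, 0, 0; 0, 0, 0; 0, 0, 0] : Matrix (Fin 3) (Fin 3) ℝ) *
        !![ε, 0, (1 - ε) / 2; 0, ε, 0; (1 - ε) / 2, 0, (1 - ε) ^ 2 / (4 * ε)]).trace = ε ∧
      ((!![1, 0, 0; 0, 1, 0; 0, 0, 0] : Matrix (Fin 3) (Fin 3) ℝ) *
        !![ε, 0, (1 - ε) / 2; 0, ε, 0; (1 - ε) / 2, 0, (1 - ε) ^ 2 / (4 * ε)]).trace = 2 * ε) ∧
    Filter.Tendsto (fun ε : ℝ => 2 * ε) (nhdsWithin 0 (Set.Ioi 0)) (nhds 0) := by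
  constructor
  · intro ε hε hε1
    refine ⟨⟨?_, ?_⟩, ?_, ?_, ?_⟩
    · ext i j; fin_cases i <;> fin_cases j <;>
        simp [Matrix.IsHermitian, Matrix.conjTranspose, Matrix.vecHead, Matrix.vecTail]
    · intro x
      have h := x 0; have h1 := x 1; have h2 := x 2
      simp only [Finsupp.sum_fintype, Fin.sum_univ_three, star_zero, zero_mul, mul_zero,
        Finset.sum_const_zero, add_zero, implies_true,
        Matrix.cons_val_zero, Matrix.cons_val_one, Matrix.head_cons,
        Matrix.cons_val_two, Matrix.tail_cons, RCLike.star_def, map_sum,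
        Matrix.of_apply, Pi.star_apply, star_trivial]
      have key : ε * (x 0 + (1 - ε) / (2 * ε) * x 2) ^ 2 + ε * (x 1) ^ 2 =
          x 0 * (ε * x 0 + 0 * x 1 + (1 - ε) / 2 * x 2) +
          x 1 * (0 * x 0 + ε * x 1 + 0 * x 2) +
          x 2 * ((1 - ε) / 2 * x 0 + 0 * x 1 + (1 - ε) ^ 2 / (4 * ε) * x 2) := by
        field_simp
        ring
      have hpos : 0 ≤ ε * (x 0 + (1 - ε) / (2 * ε) * x 2) ^ 2 + ε * (x 1) ^ 2 := by positivity
      nlinarith [key, hpos]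
    · simp [Matrix.trace, Matrix.mul_apply, Fin.sum_univ_three, Matrix.vecHead, Matrix.vecTail]
      field_simp
      ring
    · simp [Matrix.trace, Matrix.mul_apply, Fin.sum_univ_three, Matrix.vecHead, Matrix.vecTail]
    · simp [Matrix.trace, Matrix.mul_apply, Fin.sum_univ_three, Matrix.vecHead, Matrix.vecTail]; ring
  · have : Filter.Tendsto (fun ε : ℝ => 2 * ε) (nhds 0) (nhds 0) := by
      simpa using (continuous_mul_left (2:ℝ)).tendsto (0:ℝ)
    exact this.mono_left nhdsWithin_le_nhds
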